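/- Assume μ > 0 and 3λ + 2μ > 0 (so that λ + μ > 0) and let ω = (ω₁, ω₂, 0) be a unit vector. Define q₂⁺ := (ω₁, ω₂, i, −2iμω₁, −2iμω₂, 2μ) and q₃⁺ := (0, 0, −(λ+3μ)/(λ+μ), 2μ²ω₁/(λ+μ), 2μ²ω₂/(λ+μ), 2iμ(λ+2μ)/(λ+μ)) in ℂ⁶. Then K⁰ q₃⁺ − i q₃⁺ = q₂⁺, i.e. q₃⁺ is a generalized eigenvector of K⁰ for the eigenvalue i attached to the eigenvector q₂⁺ (the eigenvalue problem for K⁰ is degenerate). -/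

import Mathlib

open Matrix

noncomputable section

/-- Isotropic elasticity tensor `C_{ijkl} = λ δ_{ij} δ_{kl} + μ (δ_{ik} δ_{jl} + δ_{il} δ_{jk})`. -/
def isoC (lam mu : ℝ) (i j k l : Fin 3) : ℝ :=
  lam * (if i = j then (1:ℝ) else 0) * (if k = l then (1:ℝ) else 0)
    + mu * ((if i = k then (1:ℝ) else 0) * (if j = l then (1:ℝ) else 0)
      + (if i = l then (1:ℝ) else 0) * (if j = k then (1:ℝ) else 0))

/-- The matrix `⟨ξ,ζ⟩` with entries `⟨ξ,ζ⟩_{ik} = Σ_{j,l} C_{ijkl} ξ_j ζ_l`. -/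
def bil (lam mu : ℝ) (ξ ζ : Fin 3 → ℝ) : Matrix (Fin 3) (Fin 3) ℝ :=
  Matrix.of fun i k => ∑ j, ∑ l, isoC lam mu i j k l * ξ j * ζ l

/-- `M₀ = ⟨e₃,e₃⟩`. -/
def Mat0 (lam mu : ℝ) : Matrix (Fin 3) (Fin 3) ℝ := bil lam mu ![0,0,1] ![0,0,1]

/-- `M₁ = ⟨e₃,ω⟩ + ⟨ω,e₃⟩` for `ω = (ω₁,ω₂,0)`. -/
def Mat1 (lam mu ω1 ω2 : ℝ) : Matrix (Fin 3) (Fin 3) ℝ :=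
  bil lam mu ![0,0,1] ![ω1,ω2,0] + bil lam mu ![ω1,ω2,0] ![0,0,1]

/-- `M₂ = ⟨ω,ω⟩`. -/
def Mat2 (lam mu ω1 ω2 : ℝ) : Matrix (Fin 3) (Fin 3) ℝ :=
  bil lam mu ![ω1,ω2,0] ![ω1,ω2,0]

/-- `⟨e₃,ω⟩`. -/
def E3w (lam mu ω1 ω2 : ℝ) : Matrix (Fin 3) (Fin 3) ℝ := bil lam mu ![0,0,1] ![ω1,ω2,0]

/-- `⟨ω,e₃⟩`. -/
def wE3 (lam mu ω1 ω2 : ℝ) : Matrix (Fin 3) (Fin 3) ℝ := bil lam mu ![ω1,ω2,0] ![0,0,1]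

/-- The 6×6 Stroh matrix
`K⁰ = [[−M₀⁻¹⟨e₃,ω⟩, −M₀⁻¹], [M₂ − ⟨ω,e₃⟩M₀⁻¹⟨e₃,ω⟩, −⟨ω,e₃⟩M₀⁻¹]]`. -/
def Stroh (lam mu ω1 ω2 : ℝ) : Matrix (Fin 6) (Fin 6) ℝ :=
  Matrix.reindex finSumFinEquiv finSumFinEquiv
    (Matrix.fromBlocks
      (-((Mat0 lam mu)⁻¹ * E3w lam mu ω1 ω2)) (-(Mat0 lam mu)⁻¹)
      (Mat2 lam mu ω1 ω2 - wE3 lam mu ω1 ω2 * (Mat0 lam mu)⁻¹ * E3w lam mu ω1 ω2)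
      (-(wE3 lam mu ω1 ω2 * (Mat0 lam mu)⁻¹)))

/-- Complex versions (real matrices regarded as complex matrices). -/
def Mat0c (lam mu : ℝ) : Matrix (Fin 3) (Fin 3) ℂ := (Mat0 lam mu).map Complex.ofReal

def Mat1c (lam mu ω1 ω2 : ℝ) : Matrix (Fin 3) (Fin 3) ℂ := (Mat1 lam mu ω1 ω2).map Complex.ofReal

def Mat2c (lam mu ω1 ω2 : ℝ) : Matrix (Fin 3) (Fin 3) ℂ := (Mat2 lam mu ω1 ω2).map Complex.ofReal

def E3wc (lam mu ω1 ω2 : ℝ) : Matrix (Fin 3) (Fin 3) ℂ := (E3w lam mu ω1 ω2).map Complex.ofReal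

def Strohc (lam mu ω1 ω2 : ℝ) : Matrix (Fin 6) (Fin 6) ℂ := (Stroh lam mu ω1 ω2).map Complex.ofReal

end

private lemma fse0' : (finSumFinEquiv.symm (0:Fin 6) : Fin 3 ⊕ Fin 3) = Sum.inl 0 := by decide
private lemma fse1' : (finSumFinEquiv.symm (1:Fin 6) : Fin 3 ⊕ Fin 3) = Sum.inl 1 := by decide
private lemma fse2' : (finSumFinEquiv.symm (2:Fin 6) : Fin 3 ⊕ Fin 3) = Sum.inl 2 := by decide
private lemma fse3' : (finSumFinEquiv.symm (3:Fin 6) : Fin 3 ⊕ Fin 3) = Sum.inr 0 := by decide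
private lemma fse4' : (finSumFinEquiv.symm (4:Fin 6) : Fin 3 ⊕ Fin 3) = Sum.inr 1 := by decide
private lemma fse5' : (finSumFinEquiv.symm (5:Fin 6) : Fin 3 ⊕ Fin 3) = Sum.inr 2 := by decide

private lemma Mat0_eq' (lam mu : ℝ) : Mat0 lam mu = !![mu,0,0;0,mu,0;0,0,lam+2*mu] := by
  ext i k
  fin_cases i <;> fin_cases k <;>
    simp [Mat0, bil, isoC, Fin.sum_univ_succ, Matrix.vecHead, Matrix.vecTail] <;> ring

private lemma E3w_eq' (lam mu ω1 ω2 : ℝ) :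
    E3w lam mu ω1 ω2 = !![0,0,mu*ω1;0,0,mu*ω2;lam*ω1,lam*ω2,0] := by
  ext i k
  fin_cases i <;> fin_cases k <;>
    simp [E3w, bil, isoC, Fin.sum_univ_succ, Matrix.vecHead, Matrix.vecTail] <;> ring

private lemma wE3_eq' (lam mu ω1 ω2 : ℝ) :
    wE3 lam mu ω1 ω2 = !![0,0,lam*ω1;0,0,lam*ω2;mu*ω1,mu*ω2,0] := by
  ext i k
  fin_cases i <;> fin_cases k <;>
    simp [wE3, bil, isoC, Fin.sum_univ_succ, Matrix.vecHead, Matrix.vecTail] <;> ring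

private lemma Mat2_eq' (lam mu ω1 ω2 : ℝ) :
    Mat2 lam mu ω1 ω2 = !![(lam+2*mu)*ω1^2+mu*ω2^2, (lam+mu)*ω1*ω2, 0;
      (lam+mu)*ω1*ω2, (lam+2*mu)*ω2^2+mu*ω1^2, 0; 0,0, mu*(ω1^2+ω2^2)] := by
  ext i k
  fin_cases i <;> fin_cases k <;>
    simp [Mat2, bil, isoC, Fin.sum_univ_succ, Matrix.vecHead, Matrix.vecTail] <;> ring

private lemma Mat0_inv' (lam mu : ℝ) (h1 : mu ≠ 0) (h2 : lam + 2*mu ≠ 0) :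
    (Mat0 lam mu)⁻¹ = !![mu⁻¹,0,0;0,mu⁻¹,0;0,0,(lam+2*mu)⁻¹] := by
  apply Matrix.inv_eq_right_inv
  rw [Mat0_eq']
  ext i k
  fin_cases i <;> fin_cases k <;>
    simp [Matrix.mul_apply, Fin.sum_univ_succ, Matrix.one_apply] <;> field_simp

private lemma cv6_0 {α : Type*} (a b c d e f : α) : (![a,b,c,d,e,f] : Fin 6 → α) 0 = a := rfl
private lemma cv6_1 {α : Type*} (a b c d e f : α) : (![a,b,c,d,e,f] : Fin 6 → α) 1 = b := rfl
private lemma cv6_2 {α : Type*} (a b c d e f : α) : (![a,b,c,d,e,f] : Fin 6 → α) 2 = c := rfl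
private lemma cv6_3 {α : Type*} (a b c d e f : α) : (![a,b,c,d,e,f] : Fin 6 → α) 3 = d := rfl
private lemma cv6_4 {α : Type*} (a b c d e f : α) : (![a,b,c,d,e,f] : Fin 6 → α) 4 = e := rfl
private lemma cv6_5 {α : Type*} (a b c d e f : α) : (![a,b,c,d,e,f] : Fin 6 → α) 5 = f := rfl

private lemma vc5' {α : Type*} (a : α) (s : Fin 5 → α) : Matrix.vecCons a s (5 : Fin 6) = s 4 := rfl
private lemma vc4' {α : Type*} (a : α) (s : Fin 4 → α) : Matrix.vecCons a s (4 : Fin 5) = s 3 := rfl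
private lemma vc3' {α : Type*} (a : α) (s : Fin 3 → α) : Matrix.vecCons a s (3 : Fin 4) = s 2 := rfl
private lemma vc2' {α : Type*} (a : α) (s : Fin 2 → α) : Matrix.vecCons a s (2 : Fin 3) = s 1 := rfl
private lemma vc1' {α : Type*} (a : α) (s : Fin 1 → α) : Matrix.vecCons a s (1 : Fin 2) = s 0 := rfl

private lemma reindex_blocks' {R : Type*} (A B C D : Matrix (Fin 3) (Fin 3) R) :
    Matrix.reindex finSumFinEquiv finSumFinEquiv (Matrix.fromBlocks A B C D) =
      !![A 0 0, A 0 1, A 0 2, B 0 0, B 0 1, B 0 2;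
         A 1 0, A 1 1, A 1 2, B 1 0, B 1 1, B 1 2;
         A 2 0, A 2 1, A 2 2, B 2 0, B 2 1, B 2 2;
         C 0 0, C 0 1, C 0 2, D 0 0, D 0 1, D 0 2;
         C 1 0, C 1 1, C 1 2, D 1 0, D 1 1, D 1 2;
         C 2 0, C 2 1, C 2 2, D 2 0, D 2 1, D 2 2] := by
  ext i j
  fin_cases i <;> fin_cases j <;> rfl

private lemma blockA' (lam mu ω1 ω2 : ℝ) (h1 : mu ≠ 0) (h2 : lam + 2*mu ≠ 0) :
    -((Mat0 lam mu)⁻¹ * E3w lam mu ω1 ω2) =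
      !![0,0,-ω1; 0,0,-ω2; -(lam*ω1/(lam+2*mu)), -(lam*ω2/(lam+2*mu)), 0] := by
  rw [Mat0_inv' lam mu h1 h2, E3w_eq']
  ext i k
  fin_cases i <;> fin_cases k <;>
    simp [Matrix.mul_apply, Fin.sum_univ_succ, Matrix.vecHead, Matrix.vecTail] <;>
    field_simp

private lemma blockB' (lam mu : ℝ) (h1 : mu ≠ 0) (h2 : lam + 2*mu ≠ 0) :
    -(Mat0 lam mu)⁻¹ = !![-mu⁻¹,0,0; 0,-mu⁻¹,0; 0,0,-(lam+2*mu)⁻¹] := by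
  rw [Mat0_inv' lam mu h1 h2]
  ext i k
  fin_cases i <;> fin_cases k <;> simp [Matrix.vecHead, Matrix.vecTail]

private lemma blockD' (lam mu ω1 ω2 : ℝ) (h1 : mu ≠ 0) (h2 : lam + 2*mu ≠ 0) :
    -(wE3 lam mu ω1 ω2 * (Mat0 lam mu)⁻¹) =
      !![0,0,-(lam*ω1/(lam+2*mu)); 0,0,-(lam*ω2/(lam+2*mu)); -ω1,-ω2,0] := by
  rw [Mat0_inv' lam mu h1 h2, wE3_eq']
  ext i k
  fin_cases i <;> fin_cases k <;>
    simp [Matrix.mul_apply, Fin.sum_univ_succ, Matrix.vecHead, Matrix.vecTail] <;>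
    field_simp

private lemma blockC' (lam mu ω1 ω2 : ℝ) (h1 : mu ≠ 0) (h2 : lam + 2*mu ≠ 0) :
    Mat2 lam mu ω1 ω2 - wE3 lam mu ω1 ω2 * (Mat0 lam mu)⁻¹ * E3w lam mu ω1 ω2 =
      !![(lam+2*mu)*ω1^2+mu*ω2^2 - lam^2*ω1^2/(lam+2*mu),
           (lam+mu)*ω1*ω2 - lam^2*ω1*ω2/(lam+2*mu), 0;
         (lam+mu)*ω1*ω2 - lam^2*ω1*ω2/(lam+2*mu),
           (lam+2*mu)*ω2^2+mu*ω1^2 - lam^2*ω2^2/(lam+2*mu), 0;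
         0, 0, 0] := by
  rw [Mat0_inv' lam mu h1 h2, wE3_eq', E3w_eq', Mat2_eq']
  ext i k
  fin_cases i <;> fin_cases k <;>
    simp [Matrix.mul_apply, Matrix.sub_apply, Fin.sum_univ_succ,
      Matrix.vecHead, Matrix.vecTail] <;>
    field_simp <;> ring

private lemma Stroh_eq' (lam mu ω1 ω2 : ℝ) (h1 : mu ≠ 0) (h2 : lam + 2*mu ≠ 0) :
    Stroh lam mu ω1 ω2 =
      !![0,0,-ω1, -mu⁻¹,0,0;
         0,0,-ω2, 0,-mu⁻¹,0;
         -(lam*ω1/(lam+2*mu)), -(lam*ω2/(lam+2*mu)), 0, 0,0, -(lam+2*mu)⁻¹;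
         (lam+2*mu)*ω1^2+mu*ω2^2 - lam^2*ω1^2/(lam+2*mu),
           (lam+mu)*ω1*ω2 - lam^2*ω1*ω2/(lam+2*mu), 0, 0,0, -(lam*ω1/(lam+2*mu));
         (lam+mu)*ω1*ω2 - lam^2*ω1*ω2/(lam+2*mu),
           (lam+2*mu)*ω2^2+mu*ω1^2 - lam^2*ω2^2/(lam+2*mu), 0, 0,0, -(lam*ω2/(lam+2*mu));
         0,0,0, -ω1,-ω2,0] := by
  rw [Stroh, blockA' lam mu ω1 ω2 h1 h2, blockB' lam mu h1 h2,
    blockC' lam mu ω1 ω2 h1 h2, blockD' lam mu ω1 ω2 h1 h2, reindex_blocks']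
  simp [Matrix.vecHead, Matrix.vecTail]

private lemma Strohc_eq' (lam mu ω1 ω2 : ℝ) (h1 : mu ≠ 0) (h2 : lam + 2*mu ≠ 0) :
    Strohc lam mu ω1 ω2 =
      !![(((0:ℝ)):ℂ),((0:ℝ):ℂ),((-ω1:ℝ):ℂ), ((-mu⁻¹:ℝ):ℂ),((0:ℝ):ℂ),((0:ℝ):ℂ);
         ((0:ℝ):ℂ),((0:ℝ):ℂ),((-ω2:ℝ):ℂ), ((0:ℝ):ℂ),((-mu⁻¹:ℝ):ℂ),((0:ℝ):ℂ);
         ((-(lam*ω1/(lam+2*mu)):ℝ):ℂ), ((-(lam*ω2/(lam+2*mu)):ℝ):ℂ), ((0:ℝ):ℂ),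
           ((0:ℝ):ℂ),((0:ℝ):ℂ), ((-(lam+2*mu)⁻¹:ℝ):ℂ);
         (((lam+2*mu)*ω1^2+mu*ω2^2 - lam^2*ω1^2/(lam+2*mu):ℝ):ℂ),
           (((lam+mu)*ω1*ω2 - lam^2*ω1*ω2/(lam+2*mu):ℝ):ℂ), ((0:ℝ):ℂ),
           ((0:ℝ):ℂ),((0:ℝ):ℂ), ((-(lam*ω1/(lam+2*mu)):ℝ):ℂ);
         (((lam+mu)*ω1*ω2 - lam^2*ω1*ω2/(lam+2*mu):ℝ):ℂ),
           (((lam+2*mu)*ω2^2+mu*ω1^2 - lam^2*ω2^2/(lam+2*mu):ℝ):ℂ), ((0:ℝ):ℂ),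
           ((0:ℝ):ℂ),((0:ℝ):ℂ), ((-(lam*ω2/(lam+2*mu)):ℝ):ℂ);
         ((0:ℝ):ℂ),((0:ℝ):ℂ),((0:ℝ):ℂ), ((-ω1:ℝ):ℂ),((-ω2:ℝ):ℂ),((0:ℝ):ℂ)] := by
  rw [show Strohc lam mu ω1 ω2 = (Stroh lam mu ω1 ω2).map Complex.ofReal from rfl,
    Stroh_eq' lam mu ω1 ω2 h1 h2]
  ext i j
  fin_cases i <;> fin_cases j <;> rfl

/-- `q₃⁺ = (0, 0, −(λ+3μ)/(λ+μ), 2μ²ω₁/(λ+μ), 2μ²ω₂/(λ+μ), 2iμ(λ+2μ)/(λ+μ))` is a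
generalized eigenvector of the Stroh matrix `K⁰` for the eigenvalue `i` attached to the
eigenvector `q₂⁺ = (ω₁, ω₂, i, −2iμω₁, −2iμω₂, 2μ)`:  `K⁰ q₃⁺ − i q₃⁺ = q₂⁺`. -/
theorem stmt4 (lam mu ω1 ω2 : ℝ) (hmu : 0 < mu) (hconv : 0 < 3 * lam + 2 * mu)
    (hω : ω1 ^ 2 + ω2 ^ 2 = 1) :
    Strohc lam mu ω1 ω2 *ᵥ
        (![0, 0, -(((lam : ℂ) + 3 * mu) / ((lam : ℂ) + mu)),
            2 * (mu : ℂ) ^ 2 * ω1 / ((lam : ℂ) + mu),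
            2 * (mu : ℂ) ^ 2 * ω2 / ((lam : ℂ) + mu),
            2 * Complex.I * mu * ((lam : ℂ) + 2 * mu) / ((lam : ℂ) + mu)] : Fin 6 → ℂ)
      - Complex.I •
        (![0, 0, -(((lam : ℂ) + 3 * mu) / ((lam : ℂ) + mu)),
            2 * (mu : ℂ) ^ 2 * ω1 / ((lam : ℂ) + mu),
            2 * (mu : ℂ) ^ 2 * ω2 / ((lam : ℂ) + mu),
            2 * Complex.I * mu * ((lam : ℂ) + 2 * mu) / ((lam : ℂ) + mu)] : Fin 6 → ℂ)
      = (![(ω1 : ℂ), (ω2 : ℂ), Complex.I, -(2 * Complex.I * mu * ω1),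
            -(2 * Complex.I * mu * ω2), 2 * (mu : ℂ)] : Fin 6 → ℂ) := by
  have h1 : mu ≠ 0 := ne_of_gt hmu
  have h2 : lam + 2*mu ≠ 0 := by nlinarith
  have h3r : lam + mu ≠ 0 := by nlinarith
  have h3 : (lam : ℂ) + mu ≠ 0 := by exact_mod_cast fun h => h3r (by exact_mod_cast h)
  have h2c : (lam : ℂ) + 2*mu ≠ 0 := by exact_mod_cast fun h => h2 (by exact_mod_cast h)
  have h1c : (mu : ℂ) ≠ 0 := by exact_mod_cast h1
  have hωc : (ω1 : ℂ)^2 + (ω2 : ℂ)^2 = 1 := by exact_mod_cast hω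
  funext i
  rw [Strohc_eq' lam mu ω1 ω2 h1 h2]
  fin_cases i <;>
    simp [Matrix.mulVec, dotProduct, Fin.sum_univ_succ, Matrix.vecHead, Matrix.vecTail,
      cv6_0, cv6_1, cv6_2, cv6_3, cv6_4, cv6_5, vc5', vc4', vc3', vc2', vc1'] <;>
    push_cast <;> field_simp <;> ring_nf <;> simp only [Complex.I_sq] <;>
    linear_combination (-(mu:ℂ)) * hωc
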